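/- (Asymptotic form of Theorem 1, the Nash equilibrium puzzle difficulty.) If 0 ≤ x n < α for all n ≥ 1 and (α − x n)³ * n² → γ with γ > 0, then the equilibrium puzzle difficulty r n = w_av/(1 + x n) − 1/((α − x n)² * n²) converges to w_av/(α + 1) as n → ∞; i.e., the Nash equilibrium difficulty satisfies k* · 2^(m*−1) = w_av/(α + 1) asymptotically. -/

import Mathlib

open Filter

/-- Asymptotic form of Theorem 1: the equilibrium puzzle difficulty
`r n = w_av/(1 + x n) - 1/((α - x n)² n²)` converges to `w_av/(α + 1)`. -/
theorem nash_equilibrium_difficulty_asymptotic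
    (α γ wav : ℝ) (hα : 0 < α) (hγ : 0 < γ) (hwav : 0 < wav)
    (x : ℕ → ℝ) (hx : ∀ n : ℕ, 1 ≤ n → 0 ≤ x n ∧ x n < α)
    (hlim : Tendsto (fun n : ℕ => (α - x n) ^ 3 * (n : ℝ) ^ 2) atTop (nhds γ))
    (r : ℕ → ℝ)
    (hr : ∀ n : ℕ, r n = wav / (1 + x n) - 1 / ((α - x n) ^ 2 * (n : ℝ) ^ 2)) :
    Tendsto r atTop (nhds (wav / (α + 1))) := by
  have hd : ∀ n : ℕ, 1 ≤ n → 0 < α - x n := fun n hn => sub_pos.2 (hx n hn).2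
  have hninv : Tendsto (fun n : ℕ => ((n : ℝ) ^ 2)⁻¹) atTop (nhds 0) :=
    tendsto_inv_atTop_zero.comp ((tendsto_pow_atTop two_ne_zero).comp
      tendsto_natCast_atTop_atTop)
  -- (α - x n)^3 → 0
  have h1 : Tendsto (fun n : ℕ => (α - x n) ^ 3) atTop (nhds 0) := by
    have := hlim.mul hninv
    rw [mul_zero] at this
    refine this.congr' ?_
    filter_upwards [eventually_ge_atTop 1] with n hn
    have hn0 : ((n : ℝ) ^ 2) ≠ 0 := by positivity
    field_simp
  -- α - x n → 0
  have h2 : Tendsto (fun n : ℕ => α - x n) atTop (nhds 0) := by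
    rw [NormedAddCommGroup.tendsto_nhds_zero] at h1 ⊢
    intro ε hε
    filter_upwards [h1 (ε ^ 3) (by positivity), eventually_ge_atTop 1] with n hcube hn
    have hpos := hd n hn
    have h3 : (α - x n) ^ 3 < ε ^ 3 := by
      have := hcube
      rwa [Real.norm_eq_abs, abs_of_pos (by positivity)] at this
    have : α - x n < ε := by
      exact lt_of_pow_lt_pow_left₀ 3 hε.le h3
    rwa [Real.norm_eq_abs, abs_of_pos hpos]
  -- x n → α
  have hxlim : Tendsto x atTop (nhds α) := by
    have := (tendsto_const_nhds (x := (α : ℝ))).sub h2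
    simpa using this
  have hA : Tendsto (fun n : ℕ => wav / (1 + x n)) atTop (nhds (wav / (1 + α))) :=
    tendsto_const_nhds.div (tendsto_const_nhds.add hxlim) (by positivity)
  have hB : Tendsto (fun n : ℕ => (α - x n) / ((α - x n) ^ 3 * (n : ℝ) ^ 2)) atTop
      (nhds 0) := by
    have := h2.div hlim hγ.ne'
    rwa [zero_div] at this
  have := hA.sub hB
  rw [sub_zero] at this
  have hkey : Tendsto r atTop (nhds (wav / (1 + α))) := by
    refine this.congr' ?_
    filter_upwards [eventually_ge_atTop 1] with n hn
    have hpos := hd n hn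
    have hn0 : (n : ℝ) ≠ 0 := Nat.cast_ne_zero.2 (by omega)
    rw [hr n]
    congr 1
    field_simp
  rwa [add_comm] at hkey
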